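/- Suppose Ω_{m,k} is a minimiser of inf{λ_k(Ω) : Ω open in ℝ^m, |Ω| < ∞, H^{m-1}(∂Ω) ≤ 1}. Then Ω*_{m,k} := int(closure(Ω_{m,k})) is also a minimiser: it is open, satisfies H^{m-1}(∂Ω*_{m,k}) ≤ 1, |Ω*_{m,k}| < ∞, and λ_k(Ω*_{m,k}) = λ_k(Ω_{m,k}). -/

import Mathlib

open MeasureTheory

/-- The frontier of `interior (closure Ω)` of an open set is contained in `frontier Ω`. -/
lemma frontier_interior_closure_subset {X : Type*} [TopologicalSpace X]
    {Ω : Set X} (hΩ : IsOpen Ω) :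
    frontier (interior (closure Ω)) ⊆ frontier Ω := by
  have h1 : Ω ⊆ interior (closure Ω) :=
    interior_maximal subset_closure hΩ
  intro x hx
  rw [frontier, interior_interior] at hx
  rcases hx with ⟨hx1, hx2⟩
  refine ⟨?_, ?_⟩
  · have : closure (interior (closure Ω)) ⊆ closure Ω :=
      closure_minimal interior_subset isClosed_closure
    exact this hx1
  · rw [hΩ.interior_eq]
    intro hxΩ
    exact hx2 (h1 hxΩ)

/-- A set with finite `H^{m-1}` measure in `EuclideanSpace ℝ (Fin m)` has Lebesgue measure 0. -/
lemma volume_eq_zero_of_hausdorff (m : ℕ) (hm : 1 ≤ m) (s : Set (EuclideanSpace ℝ (Fin m)))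
    (hs : MeasurableSet s) (h : μH[(m : ℝ) - 1] s ≠ ⊤) : volume s = 0 := by
  have hlt : (m : ℝ) - 1 < (m : ℝ) := by linarith
  have hzero : μH[(m : ℝ)] s = 0 := by
    rcases MeasureTheory.Measure.hausdorffMeasure_zero_or_top hlt s with h0 | htop
    · exact h0
    · exact absurd htop h
  -- transfer to the pi space
  set e := (MeasurableEquiv.toLp 2 (Fin m → ℝ)).symm with he
  have hvol : volume s = volume (⇑e.symm ⁻¹' s) :=
    (((EuclideanSpace.volume_preserving_symm_measurableEquiv_toLp (Fin m)).symm e).measure_preimage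
      hs.nullMeasurableSet).symm
  rw [hvol]
  have himg : ⇑e.symm ⁻¹' s = ⇑(WithLp.equiv 2 (Fin m → ℝ)) '' s := by
    ext x
    simp [he, Set.mem_image, Equiv.symm_apply_eq]
    exact ⟨fun hx => ⟨_, hx, rfl⟩, fun ⟨y, hy, hyx⟩ => by subst hyx; exact hy⟩
  have hpi : (μH[(m : ℝ)] : Measure (Fin m → ℝ)) = volume := by
    have := MeasureTheory.hausdorffMeasure_pi_real (ι := Fin m)
    simpa using this
  rw [himg, ← hpi]
  have hlip : LipschitzWith 1 (⇑(WithLp.equiv 2 (Fin m → ℝ))) := PiLp.lipschitzWith_ofLp 2 _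
  have := hlip.hausdorffMeasure_image_le (d := (m : ℝ)) (by positivity) s
  simp only [hzero, ENNReal.coe_one, one_mul, mul_zero] at this
  simpa using le_antisymm (by simpa [ENNReal.one_rpow] using this) (zero_le)

theorem stmt_10 (m k : ℕ) (hm : 2 ≤ m)
    (lamk : Set (EuclideanSpace ℝ (Fin m)) → ℝ)
    (hmono : ∀ A B : Set (EuclideanSpace ℝ (Fin m)), A ⊆ B → lamk B ≤ lamk A)
    (Ω : Set (EuclideanSpace ℝ (Fin m)))
    (hΩ : IsOpen Ω) (hvol : volume Ω < ⊤) (hH : μH[(m : ℝ) - 1] (frontier Ω) ≤ 1)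
    (hmin : ∀ U : Set (EuclideanSpace ℝ (Fin m)), IsOpen U → volume U < ⊤ →
      μH[(m : ℝ) - 1] (frontier U) ≤ 1 → lamk Ω ≤ lamk U) :
    IsOpen (interior (closure Ω)) ∧
    μH[(m : ℝ) - 1] (frontier (interior (closure Ω))) ≤ 1 ∧
    volume (interior (closure Ω)) < ⊤ ∧
    lamk (interior (closure Ω)) = lamk Ω ∧
    (∀ U : Set (EuclideanSpace ℝ (Fin m)), IsOpen U → volume U < ⊤ →
      μH[(m : ℝ) - 1] (frontier U) ≤ 1 → lamk (interior (closure Ω)) ≤ lamk U) := by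
  have hsub : Ω ⊆ interior (closure Ω) := interior_maximal subset_closure hΩ
  have hfr : frontier (interior (closure Ω)) ⊆ frontier Ω :=
    frontier_interior_closure_subset hΩ
  have hH' : μH[(m : ℝ) - 1] (frontier (interior (closure Ω))) ≤ 1 :=
    le_trans (measure_mono hfr) hH
  have hfrvol : volume (frontier Ω) = 0 :=
    volume_eq_zero_of_hausdorff m (le_trans one_le_two hm) _ isClosed_frontier.measurableSet
      (lt_of_le_of_lt hH (by norm_num)).ne
  have hvol' : volume (interior (closure Ω)) < ⊤ := by
    calc volume (interior (closure Ω)) ≤ volume (closure Ω) := measure_mono interior_subset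
    _ ≤ volume (Ω ∪ frontier Ω) := by
        apply measure_mono
        intro x hx
        by_cases h : x ∈ Ω
        · exact Or.inl h
        · exact Or.inr ⟨hx, by rwa [hΩ.interior_eq]⟩
    _ ≤ volume Ω + volume (frontier Ω) := measure_union_le _ _
    _ < ⊤ := by rw [hfrvol, add_zero]; exact hvol
  have hle : lamk (interior (closure Ω)) ≤ lamk Ω := hmono _ _ hsub
  have hge : lamk Ω ≤ lamk (interior (closure Ω)) := hmin _ isOpen_interior hvol' hH'
  have heq : lamk (interior (closure Ω)) = lamk Ω := le_antisymm hle hge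
  exact ⟨isOpen_interior, hH', hvol', heq, fun U hU hUv hUH => heq ▸ hmin U hU hUv hUH⟩
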